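/- For every μ in the positive root lattice of D_r, Lusztig's q-analogue of the Kostant partition function satisfies 𝒫(μ;q) = Σ_{T ∈ 𝒯(∞), −wt(T) = μ} q^{|T|} as polynomials in q (both sums are finite). -/

import Mathlib

/-- The strict order on the type `D_r` alphabet
`{1 ≺ ⋯ ≺ r-1 ≺ r, r̄ ≺ \overline{r-1} ≺ ⋯ ≺ 1̄}`, encoded in `{1, …, 2r} ⊂ ℕ`
by `k ↦ k` for `k ≤ r`, `r̄ ↦ r+1`, and `k̄ ↦ 2r+1-k` for `k ≤ r-1`; the
symbols `r` and `r̄` (codes `r` and `r+1`) are incomparable. -/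
def dltD (r : ℕ) (a b : ℕ) : Prop := a < b ∧ ¬(a = r ∧ b = r + 1)

/-- The weak order on the type `D_r` alphabet. -/
def dleD (r : ℕ) (a b : ℕ) : Prop := a = b ∨ dltD r a b

/-- Marginally large semistandard Young tableaux of type `D_r`, on the
partially ordered alphabet above. Conditions: exactly `r-1` rows, rows weakly
increasing, columns strictly increasing, first column `1, …, r-1`, every entry
of row `i` is `≼ ī`, the symbols `r` and `r̄` never appear in the same row, and
the number of `i`-entries in row `i` exceeds the number of boxes in row `i+1`
by exactly one. -/
structure TabD (r : ℕ) where
  row : Fin (r - 1) → List ℕ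
  entry_mem : ∀ i : Fin (r - 1), ∀ e ∈ row i, 1 ≤ e ∧ e ≤ 2 * r
  row_weak : ∀ i : Fin (r - 1), (row i).Chain' (dleD r)
  first_col : ∀ i : Fin (r - 1), (row i).head? = some (i.1 + 1)
  row_bound : ∀ i : Fin (r - 1), ∀ e ∈ row i, dleD r e (2 * r - i.1)
  not_both : ∀ i : Fin (r - 1), ¬(r ∈ row i ∧ (r + 1) ∈ row i)
  col_le : ∀ i : Fin (r - 1), ∀ h : i.1 + 1 < r - 1,
    (row ⟨i.1 + 1, h⟩).length ≤ (row i).length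
  col_strict : ∀ i : Fin (r - 1), ∀ h : i.1 + 1 < r - 1,
    ∀ j < (row ⟨i.1 + 1, h⟩).length,
      dltD r ((row i).getD j 0) ((row ⟨i.1 + 1, h⟩).getD j 0)
  marg_large : ∀ i : Fin (r - 1), (row i).count (i.1 + 1) =
    (if h : i.1 + 1 < r - 1 then (row ⟨i.1 + 1, h⟩).length else 0) + 1

/-- `ℓ_{i,x}(T)`: the number of entries with code `x` in row `i` (row
`i : Fin (r-1)` has label `i+1`; `r̄` has code `r+1` and `k̄` has code `2r+1-k`
for `k ≤ r-1`). -/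
def ellD (r : ℕ) (T : TabD r) (i : Fin (r - 1)) (x : ℕ) : ℕ := (T.row i).count x

/-- `seg′(T)`: the number of pairs `(i,x)` with `x ≻ i` and `ℓ_{i,x}(T) > 0`. -/
def segD' (r : ℕ) (T : TabD r) : ℕ :=
  ∑ i : Fin (r - 1),
    ((Finset.Icc (i.1 + 2) (2 * r)).filter fun x => ellD r T i x ≠ 0).card

/-- `e_D(T)`: the number of rows `i` containing an `ī`-segment but neither an
`r`- nor an `r̄`-segment. -/
def eD (r : ℕ) (T : TabD r) : ℕ :=
  (Finset.univ.filter fun i : Fin (r - 1) =>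
    ellD r T i (2 * r - i.1) ≠ 0 ∧ ellD r T i r = 0 ∧ ellD r T i (r + 1) = 0).card

/-- `seg(T) = seg′(T) + e_D(T)`. -/
def segD (r : ℕ) (T : TabD r) : ℕ := segD' r T + eD r T

/-- The positive root `β_{i,k} = α_i + ⋯ + α_k` of `D_r` (`1 ≤ i ≤ k ≤ r-1`),
in simple-root coordinates. -/
def betaD (r : ℕ) (i k : ℕ) : Fin r → ℕ :=
  fun j => if i ≤ j.1 + 1 ∧ j.1 + 1 ≤ k then 1 else 0

/-- The positive root `β_{i,r} = α_i + ⋯ + α_{r-2} + α_r` of `D_r`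
(`1 ≤ i ≤ r-1`), in simple-root coordinates. -/
def betaDr (r : ℕ) (i : ℕ) : Fin r → ℕ :=
  fun j => if i ≤ j.1 + 1 ∧ j.1 + 1 ≤ r - 2 then 1 else if j.1 + 1 = r then 1 else 0

/-- The positive root
`γ_{i,k} = α_i + ⋯ + α_{r-1} + α_r + α_{r-2} + ⋯ + α_k` of `D_r`
(`1 ≤ i < k ≤ r-1`), in simple-root coordinates. -/
def gammaD (r : ℕ) (i k : ℕ) : Fin r → ℕ :=
  fun j => if i ≤ j.1 + 1 ∧ j.1 + 1 ≤ k - 1 then 1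
    else if k ≤ j.1 + 1 ∧ j.1 + 1 ≤ r - 2 then 2
    else if j.1 + 1 = r - 1 ∨ j.1 + 1 = r then 1 else 0

/-- The set of positive roots of `D_r`. -/
def posRootsD (r : ℕ) : Finset (Fin r → ℕ) :=
  ((Finset.Icc 1 (r - 1) ×ˢ Finset.Icc 1 (r - 1)).filter fun p => p.1 ≤ p.2).image
      (fun p => betaD r p.1 p.2) ∪
    (Finset.Icc 1 (r - 1)).image (fun i => betaDr r i) ∪
    ((Finset.Icc 1 (r - 1) ×ˢ Finset.Icc 1 (r - 1)).filter fun p => p.1 < p.2).image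
      (fun p => gammaD r p.1 p.2)

/-- `Ξ(T)`, extended by zero to all vectors: `Ξ(T)(β_{i,k-1}) = ℓ_{i,k}(T)` for
`i < k ≤ r-1`, `Ξ(T)(β_{i,r-1}) = ℓ_{i,r}(T) + ℓ_{i,ī}(T)`,
`Ξ(T)(β_{i,r}) = ℓ_{i,r̄}(T) + ℓ_{i,ī}(T)`, and `Ξ(T)(γ_{i,k}) = ℓ_{i,k̄}(T)`
for `i < k ≤ r-1`. -/
def XiD (r : ℕ) (T : TabD r) (v : Fin r → ℕ) : ℕ :=
  ∑ i : Fin (r - 1),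
    ((∑ k ∈ Finset.Icc (i.1 + 2) (r - 1),
        if v = betaD r (i.1 + 1) (k - 1) then ellD r T i k else 0) +
      (if v = betaD r (i.1 + 1) (r - 1) then
        ellD r T i r + ellD r T i (2 * r - i.1) else 0) +
      (if v = betaDr r (i.1 + 1) then
        ellD r T i (r + 1) + ellD r T i (2 * r - i.1) else 0) +
      (∑ k ∈ Finset.Icc (i.1 + 2) (r - 1),
        if v = gammaD r (i.1 + 1) k then ellD r T i (2 * r + 1 - k) else 0))

/-- `-wt(T) = Σ_α Ξ(T)(α)·α`, in simple-root coordinates. -/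
def negwtD (r : ℕ) (T : TabD r) : Fin r → ℕ :=
  ∑ v ∈ posRootsD r, XiD r T v • v

/-- `|T|`: the number of boxes in the reduced form of `T`, counting each
`ī`-box in row `i` with multiplicity `2`. -/
def sizeD (r : ℕ) (T : TabD r) : ℕ :=
  ∑ i : Fin (r - 1),
    ((∑ x ∈ Finset.Icc (i.1 + 2) (2 * r), ellD r T i x) +
      ellD r T i (2 * r - i.1))


/-! ### Auxiliary lemmas -/

section Aux

lemma dleD_le {r a b : ℕ} (h : dleD r a b) : a ≤ b := by
  rcases h with h | ⟨h, _⟩ <;> omega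

lemma dleD_of_lt {r a b : ℕ} (h : a < b) (hx : ¬(a = r ∧ b = r + 1)) : dleD r a b :=
  Or.inr ⟨h, hx⟩

instance dleD_trans (r : ℕ) : IsTrans ℕ (dleD r) := by
  constructor
  intro a b c hab hbc
  simp only [dleD, dltD] at *
  omega

lemma sorted_of_chain' {r : ℕ} {l : List ℕ} (h : l.Chain' (dleD r)) :
    l.Pairwise (· ≤ ·) := by
  replace h := List.isChain_iff_pairwise.mp h
  exact h.imp fun hab => dleD_le hab

/-- blocks of repeated entries -/
def blocksL (f : ℕ → ℕ) (s n : ℕ) : List ℕ :=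
  (List.range' s n).flatMap fun x => List.replicate (f x) x

lemma blocksL_succ (f : ℕ → ℕ) (s n : ℕ) :
    blocksL f s (n + 1) = List.replicate (f s) s ++ blocksL f (s + 1) n := by
  simp [blocksL, List.range'_succ]

lemma count_blocksL (f : ℕ → ℕ) : ∀ n s x,
    (blocksL f s n).count x = if s ≤ x ∧ x < s + n then f x else 0 := by
  intro n
  induction n with
  | zero =>
    intro s x
    show List.count x [] = _
    rw [List.count_nil, if_neg (by omega)]
  | succ n ih =>
    intro s x
    rw [blocksL_succ, List.count_append, ih (s+1) x, List.count_replicate]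
    by_cases hxs : x = s
    · subst hxs; rw [if_pos (by simp)]; split_ifs <;> omega
    · rw [if_neg (by simpa using Ne.symm hxs)]; split_ifs <;> omega

lemma length_blocksL (f : ℕ → ℕ) : ∀ n s,
    (blocksL f s n).length = ∑ x ∈ Finset.Ico s (s + n), f x := by
  intro n
  induction n with
  | zero => intro s; simp [blocksL]
  | succ n ih =>
    intro s
    rw [blocksL_succ, List.length_append, ih (s+1), List.length_replicate,
      Finset.sum_Ico_eq_sum_range, Finset.sum_Ico_eq_sum_range]
    have h1 : s + (n+1) - s = n + 1 := by omega
    have h2 : s + 1 + n - (s+1) = n := by omega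
    rw [h1, h2, Finset.sum_range_succ']
    have h3 : ∀ x, s + 1 + x = s + (x + 1) := by omega
    simp only [h3, Finset.sum_range_succ', Nat.add_zero]
    omega

lemma mem_blocksL {f : ℕ → ℕ} {n s e : ℕ} (h : e ∈ blocksL f s n) :
    s ≤ e ∧ e < s + n ∧ f e ≠ 0 := by
  have := count_blocksL f n s e
  have hc : 0 < (blocksL f s n).count e := List.count_pos_iff.mpr h
  rw [this] at hc
  split_ifs at hc with h'
  · exact ⟨h'.1, h'.2, by omega⟩
  · omega

lemma pairwise_blocksL (r : ℕ) (f : ℕ → ℕ) (hf : f r = 0 ∨ f (r + 1) = 0) :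
    ∀ n s, (blocksL f s n).Pairwise (dleD r) := by
  intro n
  induction n with
  | zero => intro s; simp [blocksL]
  | succ n ih =>
    intro s
    rw [blocksL_succ, List.pairwise_append]
    refine ⟨List.pairwise_replicate.mpr (Or.inr (Or.inl rfl)), ih (s+1), ?_⟩
    intro a ha b hb
    have ha' := List.eq_of_mem_replicate ha
    have hb' := mem_blocksL hb
    subst ha'
    refine Or.inr ⟨by omega, ?_⟩
    rintro ⟨rfl, rfl⟩
    have hfa : f a ≠ 0 := by
      intro h0
      rw [h0] at ha; simp at ha
    rcases hf with h | h
    · exact hfa h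
    · exact hb'.2.2 h

lemma blocksL_congr {f f' : ℕ → ℕ} : ∀ {n s : ℕ},
    (∀ x, s ≤ x → x < s + n → f x = f' x) → blocksL f s n = blocksL f' s n := by
  intro n
  induction n with
  | zero => intro s _; rfl
  | succ n ih =>
    intro s h
    rw [blocksL_succ, blocksL_succ, h s (le_refl s) (by omega),
      ih (fun x hx hx' => h x (by omega) (by omega))]

lemma length_eq_sum_count {s t : ℕ} : ∀ {l : List ℕ},
    (∀ e ∈ l, s ≤ e ∧ e < t) → l.length = ∑ x ∈ Finset.Ico s t, l.count x := by
  intro l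
  induction l with
  | nil => simp
  | cons a l ih =>
    intro h
    have ha := h a List.mem_cons_self
    have : ∀ x ∈ Finset.Ico s t, (a :: l).count x = l.count x + if a = x then 1 else 0 := by
      intro x _
      simp [List.count_cons]
    rw [Finset.sum_congr rfl this, Finset.sum_add_distrib,
      Finset.sum_ite_eq (Finset.Ico s t) a (fun _ => 1)]
    rw [if_pos (by simp [Finset.mem_Ico]; omega)]
    have := ih (fun e he => h e (List.mem_cons_of_mem a he))
    simp [List.length_cons, this]

end Aux


section Roots

variable {r : ℕ}

lemma betaD_inj (hr : 4 ≤ r) {a b a' b' : ℕ} (h1 : 1 ≤ a) (h2 : a ≤ b)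
    (h3 : b ≤ r - 1) (h1' : 1 ≤ a') (h2' : a' ≤ b') (h3' : b' ≤ r - 1)
    (h : betaD r a b = betaD r a' b') : a = a' ∧ b = b' := by
  have key : ∀ m, m < r → ((a ≤ m + 1 ∧ m + 1 ≤ b) ↔ (a' ≤ m + 1 ∧ m + 1 ≤ b')) := by
    intro m hm
    have := congrFun h ⟨m, hm⟩
    simp only [betaD] at this
    split_ifs at this <;> omega
  have k1 := key (a - 1) (by omega)
  have k2 := key (a' - 1) (by omega)
  have k3 := key (b - 1) (by omega)
  have k4 := key (b' - 1) (by omega)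
  omega

lemma betaDr_inj (hr : 4 ≤ r) {a a' : ℕ} (h1 : 1 ≤ a) (h3 : a ≤ r - 1)
    (h1' : 1 ≤ a') (h3' : a' ≤ r - 1)
    (h : betaDr r a = betaDr r a') : a = a' := by
  have key : ∀ m, m < r →
      (((a ≤ m + 1 ∧ m + 1 ≤ r - 2) ∨ m + 1 = r) ↔
        ((a' ≤ m + 1 ∧ m + 1 ≤ r - 2) ∨ m + 1 = r)) := by
    intro m hm
    have := congrFun h ⟨m, hm⟩
    simp only [betaDr] at this
    split_ifs at this <;> omega
  have k1 := key (a - 1) (by omega)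
  have k2 := key (a' - 1) (by omega)
  omega

set_option maxHeartbeats 1000000 in
lemma gammaD_inj (hr : 4 ≤ r) {a k a' k' : ℕ} (h1 : 1 ≤ a) (h2 : a < k)
    (h3 : k ≤ r - 1) (h1' : 1 ≤ a') (h2' : a' < k') (h3' : k' ≤ r - 1)
    (h : gammaD r a k = gammaD r a' k') : a = a' ∧ k = k' := by
  have key : ∀ m, m < r →
      ((((a ≤ m + 1 ∧ m + 1 ≤ k - 1) ∨ (m + 1 = r - 1 ∨ m + 1 = r)) ↔
        ((a' ≤ m + 1 ∧ m + 1 ≤ k' - 1) ∨ (m + 1 = r - 1 ∨ m + 1 = r))) ∧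
       ((k ≤ m + 1 ∧ m + 1 ≤ r - 2) ↔ (k' ≤ m + 1 ∧ m + 1 ≤ r - 2))) := by
    intro m hm
    have := congrFun h ⟨m, hm⟩
    simp only [gammaD] at this
    split_ifs at this <;> omega
  have k1 := (key (a - 1) (by omega)).1
  have k2 := (key (a' - 1) (by omega)).1
  have k3 := (key (k - 1) (by omega)).2
  have k4 := (key (k' - 1) (by omega)).2
  omega

lemma betaD_ne_betaDr (hr : 4 ≤ r) {a b a' : ℕ} (h3 : b ≤ r - 1) :
    betaD r a b ≠ betaDr r a' := by
  intro h
  have := congrFun h ⟨r - 1, by omega⟩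
  simp only [betaD, betaDr] at this
  split_ifs at this <;> omega

lemma betaD_ne_gammaD (hr : 4 ≤ r) {a b a' k' : ℕ} (h3 : b ≤ r - 1) (h3' : k' ≤ r - 1) :
    betaD r a b ≠ gammaD r a' k' := by
  intro h
  have := congrFun h ⟨r - 1, by omega⟩
  simp only [betaD, gammaD] at this
  split_ifs at this <;> omega

lemma betaDr_ne_gammaD (hr : 4 ≤ r) {a a' k' : ℕ} (h3' : k' ≤ r - 1) :
    betaDr r a ≠ gammaD r a' k' := by
  intro h
  have := congrFun h ⟨r - 2, by omega⟩
  simp only [betaDr, gammaD] at this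
  split_ifs at this <;> omega

lemma betaD_mem (hr : 4 ≤ r) {a b : ℕ} (h1 : 1 ≤ a) (h2 : a ≤ b) (h3 : b ≤ r - 1) :
    betaD r a b ∈ posRootsD r := by
  apply Finset.mem_union_left
  apply Finset.mem_union_left
  refine Finset.mem_image.mpr ⟨(a, b), ?_, rfl⟩
  simp only [Finset.mem_filter, Finset.mem_product, Finset.mem_Icc]
  omega

lemma betaDr_mem (hr : 4 ≤ r) {a : ℕ} (h1 : 1 ≤ a) (h3 : a ≤ r - 1) :
    betaDr r a ∈ posRootsD r := by
  apply Finset.mem_union_left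
  apply Finset.mem_union_right
  apply Finset.mem_image_of_mem
  simp only [Finset.mem_Icc]
  omega

lemma gammaD_mem (hr : 4 ≤ r) {a k : ℕ} (h1 : 1 ≤ a) (h2 : a < k) (h3 : k ≤ r - 1) :
    gammaD r a k ∈ posRootsD r := by
  apply Finset.mem_union_right
  refine Finset.mem_image.mpr ⟨(a, k), ?_, rfl⟩
  simp only [Finset.mem_filter, Finset.mem_product, Finset.mem_Icc]
  omega

end Roots


section XiEval

variable {r : ℕ}

/-- The row-`i` summand of `XiD`. -/
def xiTerm (r : ℕ) (T : TabD r) (v : Fin r → ℕ) (i : Fin (r - 1)) : ℕ :=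
  (∑ k ∈ Finset.Icc (i.1 + 2) (r - 1),
      if v = betaD r (i.1 + 1) (k - 1) then ellD r T i k else 0) +
    (if v = betaD r (i.1 + 1) (r - 1) then
      ellD r T i r + ellD r T i (2 * r - i.1) else 0) +
    (if v = betaDr r (i.1 + 1) then
      ellD r T i (r + 1) + ellD r T i (2 * r - i.1) else 0) +
    (∑ k ∈ Finset.Icc (i.1 + 2) (r - 1),
      if v = gammaD r (i.1 + 1) k then ellD r T i (2 * r + 1 - k) else 0)

lemma XiD_eq_sum_xiTerm (T : TabD r) (v : Fin r → ℕ) :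
    XiD r T v = ∑ i : Fin (r - 1), xiTerm r T v i := rfl

lemma xiTerm_vanish_beta (hr : 4 ≤ r) (T : TabD r) (i : Fin (r - 1)) {a b : ℕ}
    (hne : i.1 + 1 ≠ a) (h1 : 1 ≤ a) (h2 : a ≤ b) (h3 : b ≤ r - 1) :
    xiTerm r T (betaD r a b) i = 0 := by
  have hfin : i.1 < r - 1 := i.2
  have c1 : ∀ k ∈ Finset.Icc (i.1 + 2) (r - 1),
      (if betaD r a b = betaD r (i.1 + 1) (k - 1) then ellD r T i k else 0) = 0 := by
    intro k hk; rw [Finset.mem_Icc] at hk; rw [if_neg]; intro hEq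
    have := betaD_inj hr h1 h2 h3 (by omega) (by omega) (by omega) hEq
    omega
  have c4 : ∀ k ∈ Finset.Icc (i.1 + 2) (r - 1),
      (if betaD r a b = gammaD r (i.1 + 1) k then ellD r T i (2 * r + 1 - k) else 0) = 0 := by
    intro k hk; rw [Finset.mem_Icc] at hk
    exact if_neg (betaD_ne_gammaD hr h3 (by omega))
  have c2 : betaD r a b ≠ betaD r (i.1 + 1) (r - 1) := by
    intro hEq
    have := betaD_inj hr h1 h2 h3 (by omega) (by omega) (by omega) hEq
    omega
  simp only [xiTerm]
  rw [Finset.sum_eq_zero c1, Finset.sum_eq_zero c4, if_neg c2,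
    if_neg (betaD_ne_betaDr hr h3)]
  rfl

lemma xiTerm_vanish_betaDr (hr : 4 ≤ r) (T : TabD r) (i : Fin (r - 1)) {a : ℕ}
    (hne : i.1 + 1 ≠ a) (h1 : 1 ≤ a) (h3 : a ≤ r - 1) :
    xiTerm r T (betaDr r a) i = 0 := by
  have hfin : i.1 < r - 1 := i.2
  have c1 : ∀ k ∈ Finset.Icc (i.1 + 2) (r - 1),
      (if betaDr r a = betaD r (i.1 + 1) (k - 1) then ellD r T i k else 0) = 0 := by
    intro k hk; rw [Finset.mem_Icc] at hk
    exact if_neg (Ne.symm (betaD_ne_betaDr hr (by omega)))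
  have c4 : ∀ k ∈ Finset.Icc (i.1 + 2) (r - 1),
      (if betaDr r a = gammaD r (i.1 + 1) k then ellD r T i (2 * r + 1 - k) else 0) = 0 := by
    intro k hk; rw [Finset.mem_Icc] at hk
    exact if_neg (betaDr_ne_gammaD hr (by omega))
  have c3 : betaDr r a ≠ betaDr r (i.1 + 1) := by
    intro hEq
    have := betaDr_inj hr h1 h3 (by omega) (by omega) hEq
    omega
  simp only [xiTerm]
  rw [Finset.sum_eq_zero c1, Finset.sum_eq_zero c4, if_neg c3,
    if_neg (Ne.symm (betaD_ne_betaDr hr (by omega)))]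
  rfl

lemma xiTerm_vanish_gamma (hr : 4 ≤ r) (T : TabD r) (i : Fin (r - 1)) {a k0 : ℕ}
    (hne : i.1 + 1 ≠ a) (h1 : 1 ≤ a) (h2 : a < k0) (h3 : k0 ≤ r - 1) :
    xiTerm r T (gammaD r a k0) i = 0 := by
  have hfin : i.1 < r - 1 := i.2
  have c1 : ∀ k ∈ Finset.Icc (i.1 + 2) (r - 1),
      (if gammaD r a k0 = betaD r (i.1 + 1) (k - 1) then ellD r T i k else 0) = 0 := by
    intro k hk; rw [Finset.mem_Icc] at hk
    exact if_neg (Ne.symm (betaD_ne_gammaD hr (by omega) h3))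
  have c4 : ∀ k ∈ Finset.Icc (i.1 + 2) (r - 1),
      (if gammaD r a k0 = gammaD r (i.1 + 1) k then ellD r T i (2 * r + 1 - k) else 0) = 0 := by
    intro k hk; rw [Finset.mem_Icc] at hk; rw [if_neg]; intro hEq
    have := gammaD_inj hr h1 h2 h3 (by omega) (by omega) (by omega) hEq
    omega
  simp only [xiTerm]
  rw [Finset.sum_eq_zero c1, Finset.sum_eq_zero c4,
    if_neg (Ne.symm (betaD_ne_gammaD hr (by omega) h3)),
    if_neg (Ne.symm (betaDr_ne_gammaD hr h3))]
  rfl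

lemma xiTerm_beta_mid (hr : 4 ≤ r) (T : TabD r) (i : Fin (r - 1)) {a b : ℕ}
    (hia : i.1 + 1 = a) (h2 : a ≤ b) (h3 : b ≤ r - 2) :
    xiTerm r T (betaD r a b) i = ellD r T i (b + 1) := by
  subst hia
  have hfin : i.1 < r - 1 := i.2
  have c1 : (∑ k ∈ Finset.Icc (i.1 + 2) (r - 1),
      if betaD r (i.1 + 1) b = betaD r (i.1 + 1) (k - 1) then ellD r T i k else 0)
      = ellD r T i (b + 1) := by
    have h0 : ∀ k ∈ Finset.Icc (i.1 + 2) (r - 1), k ≠ b + 1 →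
        (if betaD r (i.1 + 1) b = betaD r (i.1 + 1) (k - 1) then ellD r T i k else 0) = 0 := by
      intro k hk hkne; rw [Finset.mem_Icc] at hk; rw [if_neg]; intro hEq
      have := betaD_inj hr (by omega) h2 (by omega) (by omega) (by omega) (by omega) hEq
      omega
    rw [Finset.sum_eq_single_of_mem (b + 1) (Finset.mem_Icc.mpr (by omega)) h0,
      if_pos (by norm_num)]
  have c4 : ∀ k ∈ Finset.Icc (i.1 + 2) (r - 1),
      (if betaD r (i.1 + 1) b = gammaD r (i.1 + 1) k then ellD r T i (2 * r + 1 - k) else 0) = 0 := by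
    intro k hk; rw [Finset.mem_Icc] at hk
    exact if_neg (betaD_ne_gammaD hr (by omega) (by omega))
  have c2 : betaD r (i.1 + 1) b ≠ betaD r (i.1 + 1) (r - 1) := by
    intro hEq
    have := betaD_inj hr (by omega) h2 (by omega) (by omega) (by omega) (by omega) hEq
    omega
  simp only [xiTerm]
  rw [Finset.sum_eq_zero c4, c1, if_neg c2, if_neg (betaD_ne_betaDr hr (by omega))]
  omega

lemma xiTerm_beta_top (hr : 4 ≤ r) (T : TabD r) (i : Fin (r - 1)) {a : ℕ}
    (hia : i.1 + 1 = a) :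
    xiTerm r T (betaD r a (r - 1)) i
      = ellD r T i r + ellD r T i (2 * r - i.1) := by
  subst hia
  have hfin : i.1 < r - 1 := i.2
  have c1 : ∀ k ∈ Finset.Icc (i.1 + 2) (r - 1),
      (if betaD r (i.1 + 1) (r - 1) = betaD r (i.1 + 1) (k - 1) then ellD r T i k else 0) = 0 := by
    intro k hk; rw [Finset.mem_Icc] at hk; rw [if_neg]; intro hEq
    have := betaD_inj hr (by omega) (by omega) (by omega) (by omega) (by omega) (by omega) hEq
    omega
  have c4 : ∀ k ∈ Finset.Icc (i.1 + 2) (r - 1),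
      (if betaD r (i.1 + 1) (r - 1) = gammaD r (i.1 + 1) k then ellD r T i (2 * r + 1 - k) else 0) = 0 := by
    intro k hk; rw [Finset.mem_Icc] at hk
    exact if_neg (betaD_ne_gammaD hr (by omega) (by omega))
  simp only [xiTerm]
  rw [Finset.sum_eq_zero c1, Finset.sum_eq_zero c4,
    if_neg (betaD_ne_betaDr hr (by omega))]
  simp

lemma xiTerm_betaDr (hr : 4 ≤ r) (T : TabD r) (i : Fin (r - 1)) {a : ℕ}
    (hia : i.1 + 1 = a) :
    xiTerm r T (betaDr r a) i
      = ellD r T i (r + 1) + ellD r T i (2 * r - i.1) := by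
  subst hia
  have hfin : i.1 < r - 1 := i.2
  have c1 : ∀ k ∈ Finset.Icc (i.1 + 2) (r - 1),
      (if betaDr r (i.1 + 1) = betaD r (i.1 + 1) (k - 1) then ellD r T i k else 0) = 0 := by
    intro k hk; rw [Finset.mem_Icc] at hk
    exact if_neg (Ne.symm (betaD_ne_betaDr hr (by omega)))
  have c4 : ∀ k ∈ Finset.Icc (i.1 + 2) (r - 1),
      (if betaDr r (i.1 + 1) = gammaD r (i.1 + 1) k then ellD r T i (2 * r + 1 - k) else 0) = 0 := by
    intro k hk; rw [Finset.mem_Icc] at hk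
    exact if_neg (betaDr_ne_gammaD hr (by omega))
  simp only [xiTerm]
  rw [Finset.sum_eq_zero c1, Finset.sum_eq_zero c4,
    if_neg (Ne.symm (betaD_ne_betaDr hr (by omega)))]
  simp

lemma xiTerm_gamma (hr : 4 ≤ r) (T : TabD r) (i : Fin (r - 1)) {a k0 : ℕ}
    (hia : i.1 + 1 = a) (h2 : a < k0) (h3 : k0 ≤ r - 1) :
    xiTerm r T (gammaD r a k0) i = ellD r T i (2 * r + 1 - k0) := by
  subst hia
  have hfin : i.1 < r - 1 := i.2
  have c1 : ∀ k ∈ Finset.Icc (i.1 + 2) (r - 1),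
      (if gammaD r (i.1 + 1) k0 = betaD r (i.1 + 1) (k - 1) then ellD r T i k else 0) = 0 := by
    intro k hk; rw [Finset.mem_Icc] at hk
    exact if_neg (Ne.symm (betaD_ne_gammaD hr (by omega) h3))
  have c4 : (∑ k ∈ Finset.Icc (i.1 + 2) (r - 1),
      if gammaD r (i.1 + 1) k0 = gammaD r (i.1 + 1) k then ellD r T i (2 * r + 1 - k) else 0)
      = ellD r T i (2 * r + 1 - k0) := by
    have h0 : ∀ k ∈ Finset.Icc (i.1 + 2) (r - 1), k ≠ k0 →
        (if gammaD r (i.1 + 1) k0 = gammaD r (i.1 + 1) k then ellD r T i (2 * r + 1 - k) else 0) = 0 := by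
      intro k hk hkne; rw [Finset.mem_Icc] at hk; rw [if_neg]; intro hEq
      have := gammaD_inj hr (by omega) h2 h3 (by omega) (by omega) (by omega) hEq
      omega
    rw [Finset.sum_eq_single_of_mem k0 (Finset.mem_Icc.mpr (by omega)) h0, if_pos rfl]
  simp only [xiTerm]
  rw [Finset.sum_eq_zero c1, c4,
    if_neg (Ne.symm (betaD_ne_gammaD hr (by omega) h3)),
    if_neg (Ne.symm (betaDr_ne_gammaD hr h3))]
  omega

lemma XiD_beta_mid (hr : 4 ≤ r) (T : TabD r) {a b : ℕ}
    (h1 : 1 ≤ a) (h2 : a ≤ b) (h3 : b ≤ r - 2) :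
    XiD r T (betaD r a b) = ellD r T ⟨a - 1, by omega⟩ (b + 1) := by
  rw [XiD_eq_sum_xiTerm]
  rw [Finset.sum_eq_single_of_mem (⟨a - 1, by omega⟩ : Fin (r - 1)) (Finset.mem_univ _)
    (fun i _ hne => xiTerm_vanish_beta hr T i
      (fun hv => hne (Fin.ext (show _ = a - 1 by omega))) h1 h2 (by omega))]
  exact xiTerm_beta_mid hr T _ (by show a - 1 + 1 = a; omega) h2 h3

lemma XiD_beta_top (hr : 4 ≤ r) (T : TabD r) {a : ℕ} (h1 : 1 ≤ a) (h3 : a ≤ r - 1) :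
    XiD r T (betaD r a (r - 1))
      = ellD r T ⟨a - 1, by omega⟩ r + ellD r T ⟨a - 1, by omega⟩ (2 * r - (a - 1)) := by
  rw [XiD_eq_sum_xiTerm]
  rw [Finset.sum_eq_single_of_mem (⟨a - 1, by omega⟩ : Fin (r - 1)) (Finset.mem_univ _)
    (fun i _ hne => xiTerm_vanish_beta hr T i
      (fun hv => hne (Fin.ext (show _ = a - 1 by omega))) h1 (by omega) (by omega))]
  exact xiTerm_beta_top hr T _ (by show a - 1 + 1 = a; omega)

lemma XiD_betaDr (hr : 4 ≤ r) (T : TabD r) {a : ℕ} (h1 : 1 ≤ a) (h3 : a ≤ r - 1) :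
    XiD r T (betaDr r a)
      = ellD r T ⟨a - 1, by omega⟩ (r + 1) + ellD r T ⟨a - 1, by omega⟩ (2 * r - (a - 1)) := by
  rw [XiD_eq_sum_xiTerm]
  rw [Finset.sum_eq_single_of_mem (⟨a - 1, by omega⟩ : Fin (r - 1)) (Finset.mem_univ _)
    (fun i _ hne => xiTerm_vanish_betaDr hr T i
      (fun hv => hne (Fin.ext (show _ = a - 1 by omega))) h1 h3)]
  exact xiTerm_betaDr hr T _ (by show a - 1 + 1 = a; omega)

lemma XiD_gamma (hr : 4 ≤ r) (T : TabD r) {a k0 : ℕ}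
    (h1 : 1 ≤ a) (h2 : a < k0) (h3 : k0 ≤ r - 1) :
    XiD r T (gammaD r a k0) = ellD r T ⟨a - 1, by omega⟩ (2 * r + 1 - k0) := by
  rw [XiD_eq_sum_xiTerm]
  rw [Finset.sum_eq_single_of_mem (⟨a - 1, by omega⟩ : Fin (r - 1)) (Finset.mem_univ _)
    (fun i _ hne => xiTerm_vanish_gamma hr T i
      (fun hv => hne (Fin.ext (show _ = a - 1 by omega))) h1 h2 h3)]
  exact xiTerm_gamma hr T _ (by show a - 1 + 1 = a; omega) h2 h3

end XiEval


section SumXi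

variable {r : ℕ}

lemma ell_eq_zero_of_gt (T : TabD r) (i : Fin (r - 1)) {x : ℕ}
    (hx : 2 * r - i.1 < x) : ellD r T i x = 0 := by
  rw [ellD, List.count_eq_zero]
  intro hmem
  have := dleD_le (T.row_bound i x hmem)
  omega

lemma sum_xiTerm_eq (hr : 4 ≤ r) (T : TabD r) (i : Fin (r - 1)) :
    ∑ v ∈ posRootsD r, xiTerm r T v i
      = (∑ x ∈ Finset.Icc (i.1 + 2) (2 * r), ellD r T i x)
        + ellD r T i (2 * r - i.1) := by
  have hfin : i.1 < r - 1 := i.2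
  simp only [xiTerm]
  rw [Finset.sum_add_distrib, Finset.sum_add_distrib, Finset.sum_add_distrib]
  have hA : (∑ v ∈ posRootsD r, ∑ k ∈ Finset.Icc (i.1 + 2) (r - 1),
      if v = betaD r (i.1 + 1) (k - 1) then ellD r T i k else 0)
      = ∑ k ∈ Finset.Icc (i.1 + 2) (r - 1), ellD r T i k := by
    rw [Finset.sum_comm]
    apply Finset.sum_congr rfl
    intro k hk
    rw [Finset.mem_Icc] at hk
    rw [Finset.sum_ite_eq' (posRootsD r) (betaD r (i.1 + 1) (k - 1))
      (fun _ => ellD r T i k)]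
    rw [if_pos (betaD_mem hr (by omega) (by omega) (by omega))]
  have hB : (∑ v ∈ posRootsD r,
      if v = betaD r (i.1 + 1) (r - 1) then
        ellD r T i r + ellD r T i (2 * r - i.1) else 0)
      = ellD r T i r + ellD r T i (2 * r - i.1) := by
    rw [Finset.sum_ite_eq' (posRootsD r) (betaD r (i.1 + 1) (r - 1)) _]
    rw [if_pos (betaD_mem hr (by omega) (by omega) (by omega))]
  have hC : (∑ v ∈ posRootsD r,
      if v = betaDr r (i.1 + 1) then
        ellD r T i (r + 1) + ellD r T i (2 * r - i.1) else 0)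
      = ellD r T i (r + 1) + ellD r T i (2 * r - i.1) := by
    rw [Finset.sum_ite_eq' (posRootsD r) (betaDr r (i.1 + 1)) _]
    rw [if_pos (betaDr_mem hr (by omega) (by omega))]
  have hD : (∑ v ∈ posRootsD r, ∑ k ∈ Finset.Icc (i.1 + 2) (r - 1),
      if v = gammaD r (i.1 + 1) k then ellD r T i (2 * r + 1 - k) else 0)
      = ∑ k ∈ Finset.Icc (i.1 + 2) (r - 1), ellD r T i (2 * r + 1 - k) := by
    rw [Finset.sum_comm]
    apply Finset.sum_congr rfl
    intro k hk
    rw [Finset.mem_Icc] at hk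
    rw [Finset.sum_ite_eq' (posRootsD r) (gammaD r (i.1 + 1) k)
      (fun _ => ellD r T i (2 * r + 1 - k))]
    rw [if_pos (gammaD_mem hr (by omega) (by omega) (by omega))]
  rw [hA, hB, hC, hD]
  -- now the arithmetic identity on interval sums
  have e1 : Finset.Icc (i.1 + 2) (2 * r) = Finset.Ico (i.1 + 2) (2 * r + 1) := by
    rw [Finset.Ico_add_one_right_eq_Icc]
  have e2 : Finset.Icc (i.1 + 2) (r - 1) = Finset.Ico (i.1 + 2) r := by
    rw [← Finset.Ico_add_one_right_eq_Icc, show r - 1 + 1 = r by omega]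
  rw [e1, e2]
  have s1 : (∑ x ∈ Finset.Ico (i.1 + 2) r, ellD r T i x)
      + ∑ x ∈ Finset.Ico r (2 * r + 1), ellD r T i x
      = ∑ x ∈ Finset.Ico (i.1 + 2) (2 * r + 1), ellD r T i x :=
    Finset.sum_Ico_consecutive _ (by omega) (by omega)
  have s2 : (∑ x ∈ Finset.Ico r (r + 2), ellD r T i x)
      + ∑ x ∈ Finset.Ico (r + 2) (2 * r + 1), ellD r T i x
      = ∑ x ∈ Finset.Ico r (2 * r + 1), ellD r T i x :=
    Finset.sum_Ico_consecutive _ (by omega) (by omega)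
  have s3 : (∑ x ∈ Finset.Ico (r + 2) (2 * r - i.1), ellD r T i x)
      + ∑ x ∈ Finset.Ico (2 * r - i.1) (2 * r + 1), ellD r T i x
      = ∑ x ∈ Finset.Ico (r + 2) (2 * r + 1), ellD r T i x :=
    Finset.sum_Ico_consecutive _ (by omega) (by omega)
  have s4 : ∑ x ∈ Finset.Ico r (r + 2), ellD r T i x
      = ellD r T i r + ellD r T i (r + 1) := by
    rw [show r + 2 = (r + 1) + 1 by omega, Finset.sum_Ico_succ_top (by omega),
      Finset.sum_Ico_succ_top (by omega), Finset.Ico_self, Finset.sum_empty]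
    omega
  have s5 : ∑ x ∈ Finset.Ico (2 * r - i.1) (2 * r + 1), ellD r T i x
      = ellD r T i (2 * r - i.1) := by
    have : ∀ x ∈ Finset.Ico (2 * r - i.1 + 1) (2 * r + 1), ellD r T i x = 0 := by
      intro x hx
      rw [Finset.mem_Ico] at hx
      exact ell_eq_zero_of_gt T i (by omega)
    rw [← Finset.sum_Ico_consecutive (fun x => ellD r T i x)
        (show 2 * r - i.1 ≤ 2 * r - i.1 + 1 by omega) (show 2 * r - i.1 + 1 ≤ 2 * r + 1 by omega),
      Finset.sum_eq_zero this, Nat.Ico_succ_singleton, Finset.sum_singleton]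
    omega
  have s6 : ∑ k ∈ Finset.Ico (i.1 + 2) r, ellD r T i (2 * r + 1 - k)
      = ∑ x ∈ Finset.Ico (r + 2) (2 * r - i.1), ellD r T i x := by
    apply Finset.sum_nbij' (i := fun k => 2 * r + 1 - k) (j := fun x => 2 * r + 1 - x)
    · intro a ha; rw [Finset.mem_Ico] at *; omega
    · intro a ha; rw [Finset.mem_Ico] at *; omega
    · intro a ha; rw [Finset.mem_Ico] at ha; omega
    · intro a ha; rw [Finset.mem_Ico] at ha; omega
    · intro a ha; rfl
  omega

lemma sum_XiD (hr : 4 ≤ r) (T : TabD r) :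
    ∑ v ∈ posRootsD r, XiD r T v = sizeD r T := by
  simp only [XiD_eq_sum_xiTerm]
  rw [Finset.sum_comm, sizeD]
  exact Finset.sum_congr rfl (fun i _ => sum_xiTerm_eq hr T i)

lemma sum_XiD_subtype (hr : 4 ≤ r) (T : TabD r) :
    ∑ α : {v // v ∈ posRootsD r}, XiD r T α.1 = sizeD r T := by
  rw [← sum_XiD hr T]
  exact Finset.sum_coe_sort (posRootsD r) (XiD r T)

lemma sum_XiD_smul_subtype (T : TabD r) :
    ∑ α : {v // v ∈ posRootsD r}, XiD r T α.1 • α.1 = negwtD r T := by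
  rw [negwtD]
  exact Finset.sum_coe_sort (posRootsD r) (fun v => XiD r T v • v)

end SumXi


section Construction

variable {r : ℕ}

/-- The `ℓ`-data determined by a Kostant partition `C`. -/
def ellC (r : ℕ) (C : (Fin r → ℕ) → ℕ) (i x : ℕ) : ℕ :=
  if i + 2 ≤ x ∧ x ≤ r - 1 then C (betaD r (i + 1) (x - 1))
  else if x = r then
    C (betaD r (i + 1) (r - 1)) - min (C (betaD r (i + 1) (r - 1))) (C (betaDr r (i + 1)))
  else if x = r + 1 then
    C (betaDr r (i + 1)) - min (C (betaD r (i + 1) (r - 1))) (C (betaDr r (i + 1)))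
  else if r + 2 ≤ x ∧ x ≤ 2 * r - 1 - i then C (gammaD r (i + 1) (2 * r + 1 - x))
  else if x = 2 * r - i then
    min (C (betaD r (i + 1) (r - 1))) (C (betaDr r (i + 1)))
  else 0

def tailD (r : ℕ) (C : (Fin r → ℕ) → ℕ) (i : ℕ) : List ℕ :=
  blocksL (ellC r C i) (i + 2) (2 * r - 2 * i - 1)

def rowLenD (r : ℕ) (C : (Fin r → ℕ) → ℕ) (i : ℕ) : ℕ :=
  ∑ i' ∈ Finset.Icc i (r - 2), ((tailD r C i').length + 1)

def rowD (r : ℕ) (C : (Fin r → ℕ) → ℕ) (i : ℕ) : List ℕ :=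
  List.replicate (rowLenD r C (i + 1) + 1) (i + 1) ++ tailD r C i

variable {C : (Fin r → ℕ) → ℕ}

lemma ellC_r (hr : 4 ≤ r) (C : (Fin r → ℕ) → ℕ) (i : ℕ) :
    ellC r C i r = C (betaD r (i + 1) (r - 1))
      - min (C (betaD r (i + 1) (r - 1))) (C (betaDr r (i + 1))) := by
  rw [ellC, if_neg (by omega), if_pos rfl]

lemma ellC_rbar (hr : 4 ≤ r) (C : (Fin r → ℕ) → ℕ) (i : ℕ) :
    ellC r C i (r + 1) = C (betaDr r (i + 1))
      - min (C (betaD r (i + 1) (r - 1))) (C (betaDr r (i + 1))) := by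
  rw [ellC, if_neg (by omega), if_neg (by omega), if_pos rfl]

lemma ellC_ibar (hr : 4 ≤ r) (C : (Fin r → ℕ) → ℕ) {i : ℕ} (hi : i ≤ r - 2) :
    ellC r C i (2 * r - i)
      = min (C (betaD r (i + 1) (r - 1))) (C (betaDr r (i + 1))) := by
  rw [ellC, if_neg (by omega), if_neg (by omega), if_neg (by omega),
    if_neg (by omega), if_pos rfl]

lemma ellC_min_zero (hr : 4 ≤ r) (C : (Fin r → ℕ) → ℕ) (i : ℕ) :
    ellC r C i r = 0 ∨ ellC r C i (r + 1) = 0 := by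
  rw [ellC_r hr, ellC_rbar hr]
  omega

lemma rowD_eq_blocks (hr : 4 ≤ r) {i : ℕ} (hi : i ≤ r - 2) :
    rowD r C i = blocksL
      (fun x => if x = i + 1 then rowLenD r C (i + 1) + 1 else ellC r C i x)
      (i + 1) (2 * r - 2 * i) := by
  rw [show 2 * r - 2 * i = (2 * r - 2 * i - 1) + 1 by omega, blocksL_succ, rowD]
  congr 1
  · rw [if_pos rfl]
  · rw [tailD, show i + 1 + 1 = i + 2 by omega]
    apply blocksL_congr
    intro x hx hx'
    rw [if_neg (by omega)]

lemma length_tailD (hr : 4 ≤ r) {i : ℕ} (hi : i ≤ r - 2) :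
    (tailD r C i).length = ∑ x ∈ Finset.Ico (i + 2) (2 * r - i + 1), ellC r C i x := by
  rw [tailD, length_blocksL, show i + 2 + (2 * r - 2 * i - 1) = 2 * r - i + 1 by omega]

lemma length_rowD (hr : 4 ≤ r) {i : ℕ} (hi : i ≤ r - 2) :
    (rowD r C i).length = rowLenD r C i := by
  rw [rowD, List.length_append, List.length_replicate]
  have hins : Finset.Icc i (r - 2) = insert i (Finset.Icc (i + 1) (r - 2)) := by
    ext x; simp only [Finset.mem_Icc, Finset.mem_insert]; omega
  conv_rhs => rw [rowLenD, hins]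
  rw [Finset.sum_insert (by simp only [Finset.mem_Icc]; omega)]
  simp only [rowLenD]
  omega

lemma count_rowD (hr : 4 ≤ r) {i : ℕ} (hi : i ≤ r - 2) {x : ℕ} (hx : i + 2 ≤ x) :
    (rowD r C i).count x = if x ≤ 2 * r - i then ellC r C i x else 0 := by
  rw [rowD, List.count_append, List.count_replicate,
    if_neg (by simp only [beq_iff_eq]; omega), tailD, count_blocksL]
  rw [show i + 2 + (2 * r - 2 * i - 1) = 2 * r - i + 1 by omega]
  split_ifs <;> omega

lemma count_rowD_self (hr : 4 ≤ r) {i : ℕ} (hi : i ≤ r - 2) :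
    (rowD r C i).count (i + 1) = rowLenD r C (i + 1) + 1 := by
  rw [rowD, List.count_append, List.count_replicate, if_pos (by simp), tailD,
    count_blocksL, if_neg (by omega)]

lemma mem_rowD (hr : 4 ≤ r) {i : ℕ} (hi : i ≤ r - 2) {e : ℕ}
    (he : e ∈ rowD r C i) : i + 1 ≤ e ∧ e ≤ 2 * r - i := by
  rw [rowD_eq_blocks hr hi] at he
  have := mem_blocksL he
  omega

lemma getD_append_replicate_lt {n a j : ℕ} {t : List ℕ} (h : j < n) :
    ((List.replicate n a ++ t).getD j 0) = a := by
  have hlen : j < (List.replicate n a ++ t).length := by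
    rw [List.length_append, List.length_replicate]; omega
  rw [List.getD_eq_getElem?_getD, List.getElem?_eq_getElem hlen, Option.getD_some,
    List.getElem_append_left (by rw [List.length_replicate]; omega),
    List.getElem_replicate]

lemma getD_mem_of_lt {l : List ℕ} {j : ℕ} (h : j < l.length) : l.getD j 0 ∈ l := by
  rw [List.getD_eq_getElem?_getD, List.getElem?_eq_getElem h, Option.getD_some]
  exact List.getElem_mem h

/-- The tableau constructed from a Kostant partition. -/
def mkTab (r : ℕ) (hr : 4 ≤ r) (C : (Fin r → ℕ) → ℕ) : TabD r where
  row i := rowD r C i.1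
  entry_mem i e he := by
    have hi : i.1 ≤ r - 2 := by have := i.2; omega
    have := mem_rowD hr hi he
    omega
  row_weak i := by
    have hi : i.1 ≤ r - 2 := by have := i.2; omega
    show List.Chain' (dleD r) (rowD r C i.1)
    rw [rowD_eq_blocks hr hi]
    apply List.Pairwise.isChain
    apply pairwise_blocksL
    have h1 : (r : ℕ) ≠ i.1 + 1 := by omega
    have h2 : r + 1 ≠ i.1 + 1 := by omega
    rw [if_neg h1, if_neg h2]
    exact ellC_min_zero hr C i.1
  first_col i := by
    show (rowD r C i.1).head? = some (i.1 + 1)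
    rw [rowD, List.replicate_succ, List.cons_append, List.head?_cons]
  row_bound i e he := by
    have hi : i.1 ≤ r - 2 := by have := i.2; omega
    have hm := mem_rowD hr hi he
    rcases Nat.lt_or_ge e (2 * r - i.1) with h | h
    · exact Or.inr ⟨h, by omega⟩
    · exact Or.inl (by omega)
  not_both i := by
    rintro ⟨h1', h2'⟩
    have hi : i.1 ≤ r - 2 := by have := i.2; omega
    have h1 : r ∈ rowD r C i.1 := h1'
    have h2 : r + 1 ∈ rowD r C i.1 := h2'
    rw [rowD_eq_blocks hr hi] at h1 h2
    have hg1 : (if (r : ℕ) = i.1 + 1 then rowLenD r C (i.1 + 1) + 1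
        else ellC r C i.1 r) ≠ 0 := (mem_blocksL h1).2.2
    have hg2 : (if r + 1 = i.1 + 1 then rowLenD r C (i.1 + 1) + 1
        else ellC r C i.1 (r + 1)) ≠ 0 := (mem_blocksL h2).2.2
    rw [if_neg (by omega)] at hg1
    rw [if_neg (by omega)] at hg2
    rcases ellC_min_zero hr C i.1 with h | h
    · exact hg1 h
    · exact hg2 h
  col_le i h := by
    show (rowD r C (i.1 + 1)).length ≤ (rowD r C i.1).length
    rw [length_rowD hr (by omega), length_rowD hr (by omega), rowLenD, rowLenD]
    apply Finset.sum_le_sum_of_subset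
    exact Finset.Icc_subset_Icc (by omega) (le_refl _)
  col_strict i h j hj := by
    have hj2 : j < (rowD r C (i.1 + 1)).length := hj
    have hj' : j < rowLenD r C (i.1 + 1) := by
      have : (rowD r C (i.1 + 1)).length = rowLenD r C (i.1 + 1) :=
        length_rowD hr (by omega)
      omega
    have e1 : (rowD r C i.1).getD j 0 = i.1 + 1 := by
      rw [rowD]
      exact getD_append_replicate_lt (by omega)
    show dltD r ((rowD r C i.1).getD j 0) ((rowD r C (i.1 + 1)).getD j 0)
    rw [e1]
    have e2 : (rowD r C (i.1 + 1)).getD j 0 ∈ rowD r C (i.1 + 1) :=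
      getD_mem_of_lt (by
        rw [length_rowD hr (by omega)]; omega)
    have := mem_rowD hr (show i.1 + 1 ≤ r - 2 by omega) e2
    exact ⟨by omega, by omega⟩
  marg_large i := by
    have hi : i.1 ≤ r - 2 := by have := i.2; omega
    show (rowD r C i.1).count (i.1 + 1) = _
    rw [count_rowD_self hr hi]
    split_ifs with h
    · show rowLenD r C (i.1 + 1) + 1 = (rowD r C (i.1 + 1)).length + 1
      rw [length_rowD hr (by omega)]
    · have hie : i.1 + 1 = r - 1 := by have := i.2; omega
      rw [hie, rowLenD, Finset.Icc_eq_empty (by omega), Finset.sum_empty]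

end Construction


section Inverse

variable {r : ℕ}

/-- Extension of a function on positive roots by zero. -/
def CExt (r : ℕ) (c : {v // v ∈ posRootsD r} → ℕ) : (Fin r → ℕ) → ℕ :=
  fun v => if h : v ∈ posRootsD r then c ⟨v, h⟩ else 0

lemma CExt_root (c : {v // v ∈ posRootsD r} → ℕ) {v : Fin r → ℕ}
    (hv : v ∈ posRootsD r) : CExt r c v = c ⟨v, hv⟩ := by
  simp only [CExt]
  rw [dif_pos hv]

lemma XiD_mkTab (hr : 4 ≤ r) (c : {v // v ∈ posRootsD r} → ℕ) {v : Fin r → ℕ}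
    (hv : v ∈ posRootsD r) :
    XiD r (mkTab r hr (CExt r c)) v = c ⟨v, hv⟩ := by
  rcases Finset.mem_union.mp hv with h' | h3
  · rcases Finset.mem_union.mp h' with h1 | h2
    · -- beta family
      obtain ⟨⟨a, b⟩, hp, rfl⟩ := Finset.mem_image.mp h1
      rw [Finset.mem_filter, Finset.mem_product, Finset.mem_Icc, Finset.mem_Icc] at hp
      obtain ⟨⟨⟨ha1, ha2⟩, hb1, hb2⟩, hab⟩ := hp
      by_cases hbr : b ≤ r - 2
      · rw [XiD_beta_mid hr _ ha1 hab hbr]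
        show (rowD r (CExt r c) (a - 1)).count (b + 1) = _
        rw [count_rowD hr (by omega) (by omega), if_pos (by omega), ellC,
          if_pos (by omega), show a - 1 + 1 = a by omega, show b + 1 - 1 = b by omega,
          CExt_root c hv]
      · have hbr' : b = r - 1 := by omega
        subst hbr'
        rw [XiD_beta_top hr _ ha1 ha2]
        have k1 : ellD r (mkTab r hr (CExt r c)) ⟨a - 1, by omega⟩ r
            = CExt r c (betaD r a (r - 1))
              - min (CExt r c (betaD r a (r - 1))) (CExt r c (betaDr r a)) := by
          show (rowD r (CExt r c) (a - 1)).count r = _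
          rw [count_rowD hr (by omega) (by omega), if_pos (by omega), ellC_r hr,
            show a - 1 + 1 = a by omega]
        have k2 : ellD r (mkTab r hr (CExt r c)) ⟨a - 1, by omega⟩ (2 * r - (a - 1))
            = min (CExt r c (betaD r a (r - 1))) (CExt r c (betaDr r a)) := by
          show (rowD r (CExt r c) (a - 1)).count (2 * r - (a - 1)) = _
          rw [count_rowD hr (by omega) (by omega), if_pos (by omega),
            ellC_ibar hr _ (by omega), show a - 1 + 1 = a by omega]
        rw [k1, k2, CExt_root c hv]
        have := Nat.min_le_left (CExt r c (betaD r a (r - 1))) (CExt r c (betaDr r a))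
        omega
    · -- betaDr family
      obtain ⟨a, hp, rfl⟩ := Finset.mem_image.mp h2
      rw [Finset.mem_Icc] at hp
      obtain ⟨ha1, ha2⟩ := hp
      rw [XiD_betaDr hr _ ha1 ha2]
      have k1 : ellD r (mkTab r hr (CExt r c)) ⟨a - 1, by omega⟩ (r + 1)
          = CExt r c (betaDr r a)
            - min (CExt r c (betaD r a (r - 1))) (CExt r c (betaDr r a)) := by
        show (rowD r (CExt r c) (a - 1)).count (r + 1) = _
        rw [count_rowD hr (by omega) (by omega), if_pos (by omega), ellC_rbar hr,
          show a - 1 + 1 = a by omega]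
      have k2 : ellD r (mkTab r hr (CExt r c)) ⟨a - 1, by omega⟩ (2 * r - (a - 1))
          = min (CExt r c (betaD r a (r - 1))) (CExt r c (betaDr r a)) := by
        show (rowD r (CExt r c) (a - 1)).count (2 * r - (a - 1)) = _
        rw [count_rowD hr (by omega) (by omega), if_pos (by omega),
          ellC_ibar hr _ (by omega), show a - 1 + 1 = a by omega]
      rw [k1, k2, CExt_root c hv]
      have := Nat.min_le_right (CExt r c (betaD r a (r - 1))) (CExt r c (betaDr r a))
      omega
  · -- gamma family
    obtain ⟨⟨a, k⟩, hp, rfl⟩ := Finset.mem_image.mp h3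
    rw [Finset.mem_filter, Finset.mem_product, Finset.mem_Icc, Finset.mem_Icc] at hp
    obtain ⟨⟨⟨ha1, ha2⟩, hk1, hk2⟩, hak⟩ := hp
    rw [XiD_gamma hr _ ha1 hak hk2]
    show (rowD r (CExt r c) (a - 1)).count (2 * r + 1 - k) = _
    rw [count_rowD hr (by omega) (by omega), if_pos (by omega), ellC,
      if_neg (by omega), if_neg (by omega), if_neg (by omega), if_pos (by omega),
      show a - 1 + 1 = a by omega, show 2 * r + 1 - (2 * r + 1 - k) = k by omega,
      CExt_root c hv]

lemma row_lb (T : TabD r) (i : Fin (r - 1)) : ∀ e ∈ T.row i, i.1 + 1 ≤ e := by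
  have hs := sorted_of_chain' (T.row_weak i)
  have hh := T.first_col i
  cases hl : T.row i with
  | nil => rw [hl] at hh; simp at hh
  | cons a t =>
    rw [hl] at hh
    rw [List.head?_cons, Option.some_inj] at hh
    subst hh
    rw [hl] at hs
    intro e he
    rcases List.mem_cons.mp he with rfl | he'
    · exact le_refl _
    · exact (List.pairwise_cons.mp hs).1 e he'

lemma ellD_ub_zero (T : TabD r) (i : Fin (r - 1)) {x : ℕ} (hx : x < i.1 + 1) :
    ellD r T i x = 0 := by
  rw [ellD, List.count_eq_zero]
  intro hmem
  have := row_lb T i x hmem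
  omega

lemma ellC_XiD (hr : 4 ≤ r) (T : TabD r) (i : Fin (r - 1)) {x : ℕ}
    (hx1 : i.1 + 2 ≤ x) (hx2 : x ≤ 2 * r - i.1) :
    ellC r (CExt r (fun α => XiD r T α.1)) i.1 x = ellD r T i x := by
  have hfin : i.1 < r - 1 := i.2
  have hmz : ellD r T i r = 0 ∨ ellD r T i (r + 1) = 0 := by
    by_contra hcon
    push_neg at hcon
    exact T.not_both i ⟨List.count_pos_iff.mp (Nat.pos_of_ne_zero hcon.1),
      List.count_pos_iff.mp (Nat.pos_of_ne_zero hcon.2)⟩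
  have hfi : ∀ h : i.1 + 1 - 1 < r - 1, (⟨i.1 + 1 - 1, h⟩ : Fin (r - 1)) = i :=
    fun h => Fin.ext (show i.1 + 1 - 1 = i.1 by omega)
  have hA : CExt r (fun α => XiD r T α.1) (betaD r (i.1 + 1) (r - 1))
      = ellD r T i r + ellD r T i (2 * r - i.1) := by
    rw [CExt_root _ (betaD_mem hr (by omega) (by omega) (by omega))]
    rw [XiD_beta_top hr T (by omega) (by omega), hfi, show 2 * r - (i.1 + 1 - 1) = 2 * r - i.1 by omega]
  have hB : CExt r (fun α => XiD r T α.1) (betaDr r (i.1 + 1))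
      = ellD r T i (r + 1) + ellD r T i (2 * r - i.1) := by
    rw [CExt_root _ (betaDr_mem hr (by omega) (by omega))]
    rw [XiD_betaDr hr T (by omega) (by omega), hfi, show 2 * r - (i.1 + 1 - 1) = 2 * r - i.1 by omega]
  by_cases c1 : x ≤ r - 1
  · rw [ellC, if_pos (by omega)]
    rw [CExt_root _ (betaD_mem hr (by omega) (by omega) (by omega))]
    rw [XiD_beta_mid hr T (by omega) (by omega) (by omega), hfi,
      show x - 1 + 1 = x by omega]
  · by_cases c2 : x = r
    · subst c2
      rw [ellC_r hr, hA, hB]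
      omega
    · by_cases c3 : x = r + 1
      · subst c3
        rw [ellC_rbar hr, hA, hB]
        omega
      · by_cases c4 : x ≤ 2 * r - 1 - i.1
        · rw [ellC, if_neg (by omega), if_neg (by omega), if_neg (by omega),
            if_pos (by omega)]
          rw [CExt_root _ (gammaD_mem hr (by omega) (by omega) (by omega))]
          rw [XiD_gamma hr T (by omega) (by omega) (by omega), hfi,
            show 2 * r + 1 - (2 * r + 1 - x) = x by omega]
        · have c5 : x = 2 * r - i.1 := by omega
          subst c5
          rw [ellC_ibar hr _ (by omega), hA, hB]
          omega

lemma rowLenD_cons (hr : 4 ≤ r) {C : (Fin r → ℕ) → ℕ} {i : ℕ} (hi : i ≤ r - 2) :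
    rowLenD r C i = (tailD r C i).length + 1 + rowLenD r C (i + 1) := by
  have hins : Finset.Icc i (r - 2) = insert i (Finset.Icc (i + 1) (r - 2)) := by
    ext x; simp only [Finset.mem_Icc, Finset.mem_insert]; omega
  conv_lhs => rw [rowLenD, hins]
  rw [Finset.sum_insert (by simp only [Finset.mem_Icc]; omega)]
  simp only [rowLenD]

lemma row_length_formula (hr : 4 ≤ r) (T : TabD r) (i : Fin (r - 1)) :
    (T.row i).length = ((if h : i.1 + 1 < r - 1 then (T.row ⟨i.1 + 1, h⟩).length else 0) + 1)
      + ∑ x ∈ Finset.Ico (i.1 + 2) (2 * r - i.1 + 1), ellD r T i x := by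
  have hfin : i.1 < r - 1 := i.2
  have hb : ∀ e ∈ T.row i, i.1 + 1 ≤ e ∧ e < 2 * r - i.1 + 1 := by
    intro e he
    have h1 := row_lb T i e he
    have h2 := dleD_le (T.row_bound i e he)
    omega
  rw [length_eq_sum_count hb,
    Finset.sum_eq_sum_Ico_succ_bot (by omega) (fun x => (T.row i).count x),
    T.marg_large i]
  rfl

lemma tailD_XiD_len (hr : 4 ≤ r) (T : TabD r) (i : Fin (r - 1)) :
    (tailD r (CExt r (fun α => XiD r T α.1)) i.1).length
      = ∑ x ∈ Finset.Ico (i.1 + 2) (2 * r - i.1 + 1), ellD r T i x := by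
  have hfin : i.1 < r - 1 := i.2
  rw [length_tailD hr (by omega)]
  apply Finset.sum_congr rfl
  intro x hx
  rw [Finset.mem_Ico] at hx
  exact ellC_XiD hr T i (by omega) (by omega)

lemma rowLenD_eq (hr : 4 ≤ r) (T : TabD r) :
    ∀ n, ∀ i : Fin (r - 1), r - 2 - i.1 = n →
      rowLenD r (CExt r (fun α => XiD r T α.1)) i.1 = (T.row i).length := by
  intro n
  induction n with
  | zero =>
    intro i hn
    have hfin : i.1 < r - 1 := i.2
    have hie : i.1 = r - 2 := by omega
    rw [rowLenD_cons hr (by omega), tailD_XiD_len hr T i, row_length_formula hr T i,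
      dif_neg (by omega), show i.1 + 1 = r - 1 by omega, rowLenD,
      Finset.Icc_eq_empty (by omega), Finset.sum_empty]
    omega
  | succ n ih =>
    intro i hn
    have hfin : i.1 < r - 1 := i.2
    have hlt : i.1 + 1 < r - 1 := by omega
    rw [rowLenD_cons hr (by omega), tailD_XiD_len hr T i, row_length_formula hr T i,
      dif_pos hlt]
    have := ih ⟨i.1 + 1, hlt⟩ (by simp only []; omega)
    simp only [] at this
    rw [this]
    omega

lemma mkTab_XiD_row (hr : 4 ≤ r) (T : TabD r) (i : Fin (r - 1)) :
    rowD r (CExt r (fun α => XiD r T α.1)) i.1 = T.row i := by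
  have hfin : i.1 < r - 1 := i.2
  have hs1 : (rowD r (CExt r (fun α => XiD r T α.1)) i.1).Pairwise (· ≤ ·) :=
    sorted_of_chain' ((mkTab r hr (CExt r (fun α => XiD r T α.1))).row_weak i)
  have hs2 : (T.row i).Pairwise (· ≤ ·) := sorted_of_chain' (T.row_weak i)
  apply List.Perm.eq_of_pairwise' hs1 hs2 (List.perm_iff_count.mpr ?_)
  intro x
  by_cases c1 : x < i.1 + 1
  · rw [List.count_eq_zero.mpr, List.count_eq_zero.mpr]
    · intro hmem
      have := row_lb T i x hmem
      omega
    · intro hmem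
      have := mem_rowD hr (show i.1 ≤ r - 2 by omega) hmem
      omega
  · by_cases c2 : x = i.1 + 1
    · subst c2
      rw [count_rowD_self hr (by omega)]
      have hm := T.marg_large i
      show _ = (T.row i).count (i.1 + 1)
      rw [hm]
      by_cases hlt : i.1 + 1 < r - 1
      · rw [dif_pos hlt]
        rw [rowLenD_eq hr T (r - 2 - (i.1 + 1)) ⟨i.1 + 1, hlt⟩ (by simp only [])]
      · rw [dif_neg hlt, show i.1 + 1 = r - 1 by omega, rowLenD,
          Finset.Icc_eq_empty (by omega), Finset.sum_empty]
    · by_cases c3 : x ≤ 2 * r - i.1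
      · rw [count_rowD hr (by omega) (by omega), if_pos c3,
          ellC_XiD hr T i (by omega) c3]
        rfl
      · rw [count_rowD hr (by omega) (by omega), if_neg c3]
        have := ell_eq_zero_of_gt T i (show 2 * r - i.1 < x by omega)
        rw [ellD] at this
        rw [this]

lemma TabD_ext {T T' : TabD r} (h : T.row = T'.row) : T = T' := by
  cases T; cases T'
  simp only at h
  subst h
  rfl

lemma mkTab_XiD (hr : 4 ≤ r) (T : TabD r) :
    mkTab r hr (CExt r (fun α => XiD r T α.1)) = T := by
  apply TabD_ext
  funext i
  exact mkTab_XiD_row hr T i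

end Inverse

/-- for every `μ` in the positive root lattice of `D_r`,
Lusztig's `q`-analogue of the Kostant partition function satisfies
`𝒫(μ;q) = Σ_{T ∈ 𝒯(∞), -wt(T) = μ} q^{|T|}`, stated coefficientwise in `q`. -/
theorem stmt13 (r : ℕ) (hr : 4 ≤ r) :
    ∀ μ : Fin r → ℕ, ∀ d : ℕ,
      Nat.card {c : {v // v ∈ posRootsD r} → ℕ //
          (∑ α : {v // v ∈ posRootsD r}, c α • α.1) = μ ∧
          (∑ α : {v // v ∈ posRootsD r}, c α) = d}
      = Nat.card {T : TabD r // negwtD r T = μ ∧ sizeD r T = d} := by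
  intro μ d
  refine Nat.card_congr (Equiv.subtypeEquiv
    { toFun := fun c => mkTab r hr (CExt r c)
      invFun := fun T α => XiD r T α.1
      left_inv := fun c => funext fun α => by
        obtain ⟨v, hv⟩ := α
        exact XiD_mkTab hr c hv
      right_inv := fun T => mkTab_XiD hr T } ?_)
  intro c
  have key1 : ∑ α : {v // v ∈ posRootsD r}, c α • α.1
      = negwtD r (mkTab r hr (CExt r c)) := by
    rw [← sum_XiD_smul_subtype (mkTab r hr (CExt r c))]
    exact Finset.sum_congr rfl fun α _ => by
      obtain ⟨v, hv⟩ := α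
      rw [XiD_mkTab hr c hv]
  have key2 : ∑ α : {v // v ∈ posRootsD r}, c α
      = sizeD r (mkTab r hr (CExt r c)) := by
    rw [← sum_XiD_subtype hr (mkTab r hr (CExt r c))]
    exact Finset.sum_congr rfl fun α _ => by
      obtain ⟨v, hv⟩ := α
      rw [XiD_mkTab hr c hv]
  rw [key1, key2]
  rfl
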